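/- The quotient of BB^k_n by the two-sided ideal I_n generated by e_{n−1} is isomorphic to the Ariki–Koike algebra AK^k_n; moreover I_n equals the ideal generated by any single e_i (1 ≤ i ≤ n−1). -/

import Mathlib

/-- Generators of the Ariki–Koike–Birman–Murakami–Wenzl algebra `BB^k_n`:
the braid generators `X_i` and their inverses, the idempotent-type generators
`e_i`, and the cylinder generator `Y` with its inverse. -/
inductive BBGen where
  | X (i : ℕ)
  | Xinv (i : ℕ)
  | e (i : ℕ)
  | Y
  | Yinv

namespace BBGen

variable (R : Type) [CommRing R]

/-- The canonical image of a generator in the free algebra. -/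
noncomputable abbrev g (a : BBGen) : FreeAlgebra R BBGen := FreeAlgebra.ι R a

/-- The defining relations of the Ariki–Koike–BMW algebra `BB^k_n(R)` with
parameters `x, λ, λ⁻¹, δ, κ, κ⁻¹`, `p_0, …, p_{k−1}` (with inverses) and
`A_1, …, A_{k−1}`. -/
inductive BBRel (n k : ℕ) (x lam laminv δ κ κinv : R) (p pinv Acoef : ℕ → R) :
    FreeAlgebra R BBGen → FreeAlgebra R BBGen → Prop
  | X_Xinv : ∀ i, 1 ≤ i → i ≤ n - 1 →
      BBRel n k x lam laminv δ κ κinv p pinv Acoef (g R (X i) * g R (Xinv i)) 1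
  | Xinv_X : ∀ i, 1 ≤ i → i ≤ n - 1 →
      BBRel n k x lam laminv δ κ κinv p pinv Acoef (g R (Xinv i) * g R (X i)) 1
  | Y_Yinv : BBRel n k x lam laminv δ κ κinv p pinv Acoef (g R Y * g R Yinv) 1
  | Yinv_Y : BBRel n k x lam laminv δ κ κinv p pinv Acoef (g R Yinv * g R Y) 1
  | Xcomm : ∀ i j, 1 ≤ i → i ≤ n - 1 → 1 ≤ j → j ≤ n - 1 → 1 < Nat.dist i j →
      BBRel n k x lam laminv δ κ κinv p pinv Acoef
        (g R (X i) * g R (X j)) (g R (X j) * g R (X i))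
  | braid : ∀ i j, 1 ≤ i → i ≤ n - 1 → 1 ≤ j → j ≤ n - 1 → Nat.dist i j = 1 →
      BBRel n k x lam laminv δ κ κinv p pinv Acoef
        (g R (X i) * g R (X j) * g R (X i)) (g R (X j) * g R (X i) * g R (X j))
  | Xe : ∀ i, 1 ≤ i → i ≤ n - 1 →
      BBRel n k x lam laminv δ κ κinv p pinv Acoef
        (g R (X i) * g R (e i)) (lam • g R (e i))
  | eX : ∀ i, 1 ≤ i → i ≤ n - 1 →
      BBRel n k x lam laminv δ κ κinv p pinv Acoef
        (g R (e i) * g R (X i)) (lam • g R (e i))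
  | eXe : ∀ i j, 1 ≤ i → i ≤ n - 1 → 1 ≤ j → j ≤ n - 1 → Nat.dist i j = 1 →
      BBRel n k x lam laminv δ κ κinv p pinv Acoef
        (g R (e i) * g R (X j) * g R (e i)) (laminv • g R (e i))
  | eXinve : ∀ i j, 1 ≤ i → i ≤ n - 1 → 1 ≤ j → j ≤ n - 1 → Nat.dist i j = 1 →
      BBRel n k x lam laminv δ κ κinv p pinv Acoef
        (g R (e i) * g R (Xinv j) * g R (e i)) (lam • g R (e i))
  | ee : ∀ i, 1 ≤ i → i ≤ n - 1 →
      BBRel n k x lam laminv δ κ κinv p pinv Acoef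
        (g R (e i) * g R (e i)) (x • g R (e i))
  | Xinv_eq : ∀ i, 1 ≤ i → i ≤ n - 1 →
      BBRel n k x lam laminv δ κ κinv p pinv Acoef
        (g R (Xinv i)) (g R (X i) - δ • 1 + δ • g R (e i))
  | ecomm : ∀ i j, 1 ≤ i → i ≤ n - 1 → 1 ≤ j → j ≤ n - 1 → 1 < Nat.dist i j →
      BBRel n k x lam laminv δ κ κinv p pinv Acoef
        (g R (e i) * g R (e j)) (g R (e j) * g R (e i))
  | eXX : ∀ i j, 1 ≤ i → i ≤ n - 1 → 1 ≤ j → j ≤ n - 1 → Nat.dist i j = 1 →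
      BBRel n k x lam laminv δ κ κinv p pinv Acoef
        (g R (e i) * (g R (X j) * g R (X i))) (g R (X j) * g R (X i) * g R (e j))
  | eXinvXinv : ∀ i j, 1 ≤ i → i ≤ n - 1 → 1 ≤ j → j ≤ n - 1 → Nat.dist i j = 1 →
      BBRel n k x lam laminv δ κ κinv p pinv Acoef
        (g R (e i) * (g R (Xinv j) * g R (Xinv i)))
        (g R (Xinv j) * g R (Xinv i) * g R (e j))
  | eee : ∀ i j, 1 ≤ i → i ≤ n - 1 → 1 ≤ j → j ≤ n - 1 → Nat.dist i j = 1 →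
      BBRel n k x lam laminv δ κ κinv p pinv Acoef
        (g R (e i) * g R (e j) * g R (e i)) (g R (e i))
  | fourBraid : 2 ≤ n →
      BBRel n k x lam laminv δ κ κinv p pinv Acoef
        (g R (X 1) * g R Y * g R (X 1) * g R Y) (g R Y * g R (X 1) * g R Y * g R (X 1))
  | YXcomm : ∀ i, 2 ≤ i → i ≤ n - 1 →
      BBRel n k x lam laminv δ κ κinv p pinv Acoef
        (g R Y * g R (X i)) (g R (X i) * g R Y)
  | YXYe : 2 ≤ n →
      BBRel n k x lam laminv δ κ κinv p pinv Acoef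
        (g R Y * g R (X 1) * g R Y * g R (e 1)) (κ • g R (e 1))
  | Ypoly :
      BBRel n k x lam laminv δ κ κinv p pinv Acoef
        (((List.range k).map
          (fun i => g R Y - algebraMap R (FreeAlgebra R BBGen) (p i))).prod) 0
  | eYe : ∀ m, 2 ≤ n → 1 ≤ m → m ≤ k - 1 →
      BBRel n k x lam laminv δ κ κinv p pinv Acoef
        (g R (e 1) * g R Y ^ m * g R (e 1)) (Acoef m • g R (e 1))

end BBGen

/-- The Ariki–Koike–Birman–Murakami–Wenzl algebra `BB^k_n(R)`, presented by the
generators `Y, X_i, e_i` (and the inverses of `Y` and the `X_i`) modulo the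
defining relations. -/
noncomputable def BB (R : Type) [CommRing R] (n k : ℕ)
    (x lam laminv δ κ κinv : R) (p pinv Acoef : ℕ → R) : Type :=
  RingQuot (BBGen.BBRel R n k x lam laminv δ κ κinv p pinv Acoef)

namespace BB

variable {R : Type} [CommRing R] {n k : ℕ}
  {x lam laminv δ κ κinv : R} {p pinv Acoef : ℕ → R}

noncomputable instance : Ring (BB R n k x lam laminv δ κ κinv p pinv Acoef) :=
  inferInstanceAs (Ring (RingQuot _))

noncomputable instance : Algebra R (BB R n k x lam laminv δ κ κinv p pinv Acoef) :=
  inferInstanceAs (Algebra R (RingQuot _))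

/-- The image of a generator in `BB^k_n(R)`. -/
noncomputable def gen (a : BBGen) : BB R n k x lam laminv δ κ κinv p pinv Acoef :=
  RingQuot.mkAlgHom R (BBGen.BBRel R n k x lam laminv δ κ κinv p pinv Acoef)
    (FreeAlgebra.ι R a)

end BB

/-- The iterated conjugates `Z_i = L_{i-1} ⋯ L_1 · Z · R_1 ⋯ R_{i-1}`,
so that `conjIter L R Z 1 = Z` and
`conjIter L R Z (i+1) = L i * conjIter L R Z i * R i` for `i ≥ 1`. -/
def conjIter {A : Type} [Ring A] (L Rt : ℕ → A) (Z : A) : ℕ → A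
  | 0 => Z
  | 1 => Z
  | (m+2) => L (m+1) * conjIter L Rt Z (m+1) * Rt (m+1)

namespace BB

variable {R : Type} [CommRing R] {n k : ℕ}
  {x lam laminv δ κ κinv : R} {p pinv Acoef : ℕ → R}

/-- `Y_i = X_{i-1} ⋯ X_1 Y X_1⁻¹ ⋯ X_{i-1}⁻¹` in `BB^k_n(R)`. -/
noncomputable def Yi (i : ℕ) : BB R n k x lam laminv δ κ κinv p pinv Acoef :=
  conjIter (fun j => gen (BBGen.X j)) (fun j => gen (BBGen.Xinv j)) (gen BBGen.Y) i

end BB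

/-- Generators `X_0, X_1, …` of the Ariki–Koike algebra (`T i` stands for `X_i`). -/
inductive AKGen where
  | T (i : ℕ)

namespace AKGen

variable (R : Type) [CommRing R]

/-- The canonical image of a generator in the free algebra. -/
noncomputable abbrev g (a : AKGen) : FreeAlgebra R AKGen := FreeAlgebra.ι R a

/-- The defining relations of the Ariki–Koike algebra `AK^k_n(R)` with
parameters `δ` and `p_0, …, p_{k−1}`. -/
inductive AKRel (n k : ℕ) (δ : R) (p : ℕ → R) :
    FreeAlgebra R AKGen → FreeAlgebra R AKGen → Prop
  | fourBraid : 2 ≤ n →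
      AKRel n k δ p (g R (T 0) * g R (T 1) * g R (T 0) * g R (T 1))
        (g R (T 1) * g R (T 0) * g R (T 1) * g R (T 0))
  | comm : ∀ i j, i ≤ n - 1 → j ≤ n - 1 → 1 < Nat.dist i j →
      AKRel n k δ p (g R (T i) * g R (T j)) (g R (T j) * g R (T i))
  | braid : ∀ i j, 1 ≤ i → i ≤ n - 1 → 1 ≤ j → j ≤ n - 1 → Nat.dist i j = 1 →
      AKRel n k δ p (g R (T i) * g R (T j) * g R (T i))
        (g R (T j) * g R (T i) * g R (T j))
  | quad : ∀ i, 1 ≤ i → i ≤ n - 1 →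
      AKRel n k δ p (g R (T i) * g R (T i)) (δ • g R (T i) + 1)
  | poly :
      AKRel n k δ p
        (((List.range k).map
          (fun i => g R (T 0) - algebraMap R (FreeAlgebra R AKGen) (p i))).prod) 0

end AKGen

/-- The Ariki–Koike algebra `AK^k_n(R)`. -/
noncomputable def AK (R : Type) [CommRing R] (n k : ℕ) (δ : R) (p : ℕ → R) : Type :=
  RingQuot (AKGen.AKRel R n k δ p)

noncomputable instance {R : Type} [CommRing R] {n k : ℕ} {δ : R} {p : ℕ → R} :
    Ring (AK R n k δ p) :=
  inferInstanceAs (Ring (RingQuot _))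

noncomputable instance {R : Type} [CommRing R] {n k : ℕ} {δ : R} {p : ℕ → R} :
    Algebra R (AK R n k δ p) :=
  inferInstanceAs (Algebra R (RingQuot _))

section Stmt15Aux

open BBGen AKGen Polynomial

variable {R : Type} [CommRing R] (n k : ℕ)
  (x lam laminv δ κ κinv : R) (p pinv Acoef : ℕ → R)

local notation "𝓑" => BB R n k x lam laminv δ κ κinv p pinv Acoef
local notation "𝓡" => BBGen.BBRel R n k x lam laminv δ κ κinv p pinv Acoef

theorem TwoSidedIdeal.span_singleton_le {A : Type} [Ring A] {a : A}
    {J : TwoSidedIdeal A} (h : a ∈ J) : TwoSidedIdeal.span {a} ≤ J :=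
  fun _ hz => TwoSidedIdeal.mem_span_iff.mp hz J (Set.singleton_subset_iff.mpr h)

theorem BB.gen_eee {i j : ℕ} (hi1 : 1 ≤ i) (hi2 : i ≤ n - 1)
    (hj1 : 1 ≤ j) (hj2 : j ≤ n - 1) (hd : Nat.dist i j = 1) :
    (BB.gen (e i) : 𝓑) = BB.gen (e i) * BB.gen (e j) * BB.gen (e i) := by
  have h : (RingQuot.mkAlgHom R 𝓡) (g R (e i) * g R (e j) * g R (e i))
      = (RingQuot.mkAlgHom R 𝓡) (g R (e i)) :=
    RingQuot.mkAlgHom_rel R (BBRel.eee i j hi1 hi2 hj1 hj2 hd)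
  rw [map_mul, map_mul] at h
  exact h.symm

theorem span_e_le {i j : ℕ} (hi1 : 1 ≤ i) (hi2 : i ≤ n - 1)
    (hj1 : 1 ≤ j) (hj2 : j ≤ n - 1) (hd : Nat.dist i j = 1) :
    TwoSidedIdeal.span {(BB.gen (e i) : 𝓑)} ≤ TwoSidedIdeal.span {(BB.gen (e j) : 𝓑)} := by
  refine TwoSidedIdeal.span_singleton_le ?_
  have h2 := BB.gen_eee n k x lam laminv δ κ κinv p pinv Acoef hi1 hi2 hj1 hj2 hd
  rw [h2]
  have hmem : (BB.gen (e j) : 𝓑) ∈ TwoSidedIdeal.span {(BB.gen (e j) : 𝓑)} :=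
    TwoSidedIdeal.mem_span_iff.mpr (fun I hI => hI (Set.mem_singleton _))
  exact TwoSidedIdeal.mul_mem_right _ _ _ (TwoSidedIdeal.mul_mem_left _ _ _ hmem)

theorem span_e_adj {i j : ℕ} (hi1 : 1 ≤ i) (hi2 : i ≤ n - 1)
    (hj1 : 1 ≤ j) (hj2 : j ≤ n - 1) (hd : Nat.dist i j = 1) :
    TwoSidedIdeal.span {(BB.gen (e i) : 𝓑)} = TwoSidedIdeal.span {(BB.gen (e j) : 𝓑)} :=
  le_antisymm (span_e_le n k x lam laminv δ κ κinv p pinv Acoef hi1 hi2 hj1 hj2 hd)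
    (span_e_le n k x lam laminv δ κ κinv p pinv Acoef hj1 hj2 hi1 hi2 (by rwa [Nat.dist_comm]))

theorem span_e_eq_one : ∀ i, 1 ≤ i → i ≤ n - 1 →
    TwoSidedIdeal.span {(BB.gen (e i) : 𝓑)} = TwoSidedIdeal.span {(BB.gen (e 1) : 𝓑)} := by
  intro i
  induction i with
  | zero => omega
  | succ m ih =>
    intro h1 h2
    rcases Nat.eq_zero_or_pos m with hm | hm
    · subst hm; rfl
    · have : TwoSidedIdeal.span {(BB.gen (e (m+1)) : 𝓑)}
          = TwoSidedIdeal.span {(BB.gen (e m) : 𝓑)} :=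
        span_e_adj n k x lam laminv δ κ κinv p pinv Acoef h1 h2 hm (by omega)
          (by simp [Nat.dist])
      rw [this, ih hm (by omega)]

theorem span_e_eq (hn : 2 ≤ n) {i : ℕ} (hi1 : 1 ≤ i) (hi2 : i ≤ n - 1) :
    TwoSidedIdeal.span {(BB.gen (e i) : 𝓑)}
      = TwoSidedIdeal.span {(BB.gen (e (n - 1)) : 𝓑)} := by
  rw [span_e_eq_one n k x lam laminv δ κ κinv p pinv Acoef i hi1 hi2,
    span_e_eq_one n k x lam laminv δ κ κinv p pinv Acoef (n-1) (by omega) le_rfl]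

end Stmt15Aux
section Stmt15Aux2

open BBGen AKGen Polynomial

variable {R : Type} [CommRing R] (n k : ℕ) (δ : R) (p pinv : ℕ → R)

/-- image of `T m` in the Ariki–Koike algebra. -/
noncomputable def tgn (m : ℕ) : AK R n k δ p :=
  RingQuot.mkAlgHom R (AKRel R n k δ p) (FreeAlgebra.ι R (T m))

theorem tgn_quad {i : ℕ} (h1 : 1 ≤ i) (h2 : i ≤ n - 1) :
    tgn n k δ p i * tgn n k δ p i = δ • tgn n k δ p i + 1 := by
  have h : (RingQuot.mkAlgHom R (AKRel R n k δ p)) (g R (T i) * g R (T i))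
      = (RingQuot.mkAlgHom R (AKRel R n k δ p)) (δ • g R (T i) + 1) :=
    RingQuot.mkAlgHom_rel R (AKRel.quad i h1 h2)
  rw [map_mul, map_add, map_smul, map_one] at h
  exact h

theorem tgn_mul_sub {i : ℕ} (h1 : 1 ≤ i) (h2 : i ≤ n - 1) :
    tgn n k δ p i * (tgn n k δ p i - δ • 1) = 1 := by
  rw [mul_sub, tgn_quad n k δ p h1 h2, mul_smul_comm, mul_one, add_sub_cancel_left]

theorem sub_mul_tgn {i : ℕ} (h1 : 1 ≤ i) (h2 : i ≤ n - 1) :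
    (tgn n k δ p i - δ • 1) * tgn n k δ p i = 1 := by
  rw [sub_mul, tgn_quad n k δ p h1 h2, smul_mul_assoc, one_mul, add_sub_cancel_left]

/-- The characteristic polynomial of `Y` / `T 0`. -/
noncomputable def Ppoly : Polynomial R :=
  ((List.range k).map (fun i => Polynomial.X - Polynomial.C (p i))).prod

/-- Inverse of the constant coefficient of `Ppoly`. -/
noncomputable def cInv : R := (-1 : R) ^ k * ((List.range k).map pinv).prod

theorem coeff_zero_mul_cInv (hp : ∀ i, i ≤ k - 1 → p i * pinv i = 1) :
    (Ppoly k p).coeff 0 * cInv k pinv = 1 := by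
  induction k with
  | zero => simp [Ppoly, cInv]
  | succ m ih =>
    have hm : ∀ i, i ≤ m - 1 → p i * pinv i = 1 := fun i hi => hp i (by omega)
    have hpm : p m * pinv m = 1 := hp m (by omega)
    have ihm := ih hm
    rw [Ppoly, cInv, List.range_succ, List.map_append, List.map_append,
      List.prod_append, List.prod_append] at *
    simp only [List.map_cons, List.map_nil, List.prod_cons, List.prod_nil, mul_one] at *
    rw [Polynomial.mul_coeff_zero]
    have hc : ((Polynomial.X - Polynomial.C (p m)) : Polynomial R).coeff 0 = -(p m) := by
      simp
    rw [hc]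
    calc ((List.range m).map (fun i => Polynomial.X - Polynomial.C (p i))).prod.coeff 0 * -p m *
          ((-1 : R) ^ (m + 1) * (((List.range m).map pinv).prod * pinv m))
        = (((List.range m).map (fun i => Polynomial.X - Polynomial.C (p i))).prod.coeff 0 *
            ((-1 : R) ^ m * ((List.range m).map pinv).prod)) * (p m * pinv m) := by ring
      _ = 1 := by rw [ihm, hpm, one_mul]

theorem aeval_eq_prod : Polynomial.aeval (tgn n k δ p 0) (Ppoly k p)
    = ((List.range k).map
        (fun i => tgn n k δ p 0 - algebraMap R (AK R n k δ p) (p i))).prod := by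
  rw [Ppoly, map_list_prod, List.map_map]
  refine congrArg List.prod (List.map_congr_left fun i _ => ?_)
  simp [Function.comp]

theorem tgn_prod_zero :
    ((List.range k).map
      (fun i => tgn n k δ p 0 - algebraMap R (AK R n k δ p) (p i))).prod = 0 := by
  have h2 : (RingQuot.mkAlgHom R (AKRel R n k δ p))
      (((List.range k).map
        (fun i => g R (T 0) - algebraMap R (FreeAlgebra R AKGen) (p i))).prod)
      = (RingQuot.mkAlgHom R (AKRel R n k δ p)) (0 : FreeAlgebra R AKGen) :=
    RingQuot.mkAlgHom_rel R AKRel.poly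
  rw [map_zero, map_list_prod, List.map_map] at h2
  refine Eq.trans ?_ h2
  refine congrArg List.prod (List.map_congr_left fun i _ => ?_)
  simp only [Function.comp, map_sub, AlgHom.commutes, tgn]
  rfl

theorem aeval_Ppoly : Polynomial.aeval (tgn n k δ p 0) (Ppoly k p) = 0 := by
  rw [aeval_eq_prod n k δ p, tgn_prod_zero n k δ p]

theorem tgn_comm {i j : ℕ} (hi : i ≤ n - 1) (hj : j ≤ n - 1) (hd : 1 < Nat.dist i j) :
    tgn n k δ p i * tgn n k δ p j = tgn n k δ p j * tgn n k δ p i := by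
  have h : (RingQuot.mkAlgHom R (AKRel R n k δ p)) (g R (T i) * g R (T j))
      = (RingQuot.mkAlgHom R (AKRel R n k δ p)) (g R (T j) * g R (T i)) :=
    RingQuot.mkAlgHom_rel R (AKRel.comm i j hi hj hd)
  rw [map_mul, map_mul] at h
  exact h

theorem tgn_braid {i j : ℕ} (hi1 : 1 ≤ i) (hi : i ≤ n - 1) (hj1 : 1 ≤ j) (hj : j ≤ n - 1)
    (hd : Nat.dist i j = 1) :
    tgn n k δ p i * tgn n k δ p j * tgn n k δ p i
      = tgn n k δ p j * tgn n k δ p i * tgn n k δ p j := by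
  have h : (RingQuot.mkAlgHom R (AKRel R n k δ p)) (g R (T i) * g R (T j) * g R (T i))
      = (RingQuot.mkAlgHom R (AKRel R n k δ p)) (g R (T j) * g R (T i) * g R (T j)) :=
    RingQuot.mkAlgHom_rel R (AKRel.braid i j hi1 hi hj1 hj hd)
  rw [map_mul, map_mul, map_mul, map_mul] at h
  exact h

theorem tgn_fourBraid (hn : 2 ≤ n) :
    tgn n k δ p 0 * tgn n k δ p 1 * tgn n k δ p 0 * tgn n k δ p 1
      = tgn n k δ p 1 * tgn n k δ p 0 * tgn n k δ p 1 * tgn n k δ p 0 := by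
  have h : (RingQuot.mkAlgHom R (AKRel R n k δ p))
        (g R (T 0) * g R (T 1) * g R (T 0) * g R (T 1))
      = (RingQuot.mkAlgHom R (AKRel R n k δ p))
        (g R (T 1) * g R (T 0) * g R (T 1) * g R (T 0)) :=
    RingQuot.mkAlgHom_rel R (AKRel.fourBraid hn)
  simp only [map_mul] at h
  exact h

/-- Inverse of `T 0` in the Ariki–Koike algebra. -/
noncomputable def vAK : AK R n k δ p :=
  -(cInv k pinv • Polynomial.aeval (tgn n k δ p 0) (Ppoly k p).divX)

theorem t0_mul_aeval_divX :
    tgn n k δ p 0 * Polynomial.aeval (tgn n k δ p 0) (Ppoly k p).divX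
      = -(algebraMap R (AK R n k δ p) ((Ppoly k p).coeff 0)) := by
  have h := congrArg (Polynomial.aeval (tgn n k δ p 0)) (Polynomial.X_mul_divX_add (Ppoly k p))
  rw [map_add, map_mul, Polynomial.aeval_X, Polynomial.aeval_C, aeval_Ppoly n k δ p] at h
  exact eq_neg_of_add_eq_zero_left h

theorem aeval_divX_mul_t0 :
    Polynomial.aeval (tgn n k δ p 0) (Ppoly k p).divX * tgn n k δ p 0
      = -(algebraMap R (AK R n k δ p) ((Ppoly k p).coeff 0)) := by
  have h := congrArg (Polynomial.aeval (tgn n k δ p 0)) (Polynomial.divX_mul_X_add (Ppoly k p))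
  rw [map_add, map_mul, Polynomial.aeval_X, Polynomial.aeval_C, aeval_Ppoly n k δ p] at h
  exact eq_neg_of_add_eq_zero_left h

theorem t0_mul_vAK (hp : ∀ i, i ≤ k - 1 → p i * pinv i = 1) :
    tgn n k δ p 0 * vAK n k δ p pinv = 1 := by
  rw [vAK, mul_neg, mul_smul_comm, t0_mul_aeval_divX n k δ p, smul_neg, neg_neg,
    Algebra.smul_def, ← map_mul, mul_comm, coeff_zero_mul_cInv k p pinv hp, map_one]

theorem vAK_mul_t0 (hp : ∀ i, i ≤ k - 1 → p i * pinv i = 1) :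
    vAK n k δ p pinv * tgn n k δ p 0 = 1 := by
  rw [vAK, neg_mul, smul_mul_assoc, aeval_divX_mul_t0 n k δ p, smul_neg, neg_neg,
    Algebra.smul_def, ← map_mul, mul_comm, coeff_zero_mul_cInv k p pinv hp, map_one]

end Stmt15Aux2
section Stmt15Aux3

open BBGen AKGen Polynomial

/-- encoding of out-of-range generator indices -/
def encIdx (n i : ℕ) : ℕ := if i = 0 then 0 else i - n + 1

/-- decoding of out-of-range generator indices -/
def decIdx (n q : ℕ) : ℕ := if q = 0 then 0 else n + q - 1

variable {R : Type} [CommRing R] (n k : ℕ)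
  (x lam laminv δ κ κinv : R) (p pinv Acoef : ℕ → R)

/-- The map on generators inducing `BB →ₐ AK`. -/
noncomputable def phiGen : BBGen → AK R n k δ p
  | BBGen.X i => if 1 ≤ i ∧ i ≤ n - 1 then tgn n k δ p i
      else tgn n k δ p (n + 3 * encIdx n i)
  | BBGen.Xinv i => if 1 ≤ i ∧ i ≤ n - 1 then tgn n k δ p i - δ • 1
      else tgn n k δ p (n + 3 * encIdx n i + 1)
  | BBGen.e i => if 1 ≤ i ∧ i ≤ n - 1 then 0
      else tgn n k δ p (n + 3 * encIdx n i + 2)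
  | BBGen.Y => tgn n k δ p 0
  | BBGen.Yinv => vAK n k δ p pinv

theorem phiGen_X (i : ℕ) : phiGen n k δ p pinv (BBGen.X i)
    = if 1 ≤ i ∧ i ≤ n - 1 then tgn n k δ p i
      else tgn n k δ p (n + 3 * encIdx n i) := rfl

theorem phiGen_Xinv (i : ℕ) : phiGen n k δ p pinv (BBGen.Xinv i)
    = if 1 ≤ i ∧ i ≤ n - 1 then tgn n k δ p i - δ • 1
      else tgn n k δ p (n + 3 * encIdx n i + 1) := rfl

theorem phiGen_e (i : ℕ) : phiGen n k δ p pinv (BBGen.e i)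
    = if 1 ≤ i ∧ i ≤ n - 1 then 0
      else tgn n k δ p (n + 3 * encIdx n i + 2) := rfl

theorem phiGen_Y : phiGen n k δ p pinv BBGen.Y = tgn n k δ p 0 := rfl

theorem phiGen_Yinv : phiGen n k δ p pinv BBGen.Yinv = vAK n k δ p pinv := rfl

theorem phi_rel (hp : ∀ i, i ≤ k - 1 → p i * pinv i = 1) :
    ∀ ⦃a b : FreeAlgebra R BBGen⦄,
      BBGen.BBRel R n k x lam laminv δ κ κinv p pinv Acoef a b →
      FreeAlgebra.lift R (phiGen n k δ p pinv) a
        = FreeAlgebra.lift R (phiGen n k δ p pinv) b := by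
  intro a b h
  induction h with
  | X_Xinv i hi1 hi2 =>
    simp only [map_mul, map_one, FreeAlgebra.lift_ι_apply, phiGen_X, phiGen_Xinv,
      if_pos (⟨hi1, hi2⟩ : 1 ≤ i ∧ i ≤ n - 1)]
    exact tgn_mul_sub n k δ p hi1 hi2
  | Xinv_X i hi1 hi2 =>
    simp only [map_mul, map_one, FreeAlgebra.lift_ι_apply, phiGen_X, phiGen_Xinv,
      if_pos (⟨hi1, hi2⟩ : 1 ≤ i ∧ i ≤ n - 1)]
    exact sub_mul_tgn n k δ p hi1 hi2
  | Y_Yinv =>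
    simp only [map_mul, map_one, FreeAlgebra.lift_ι_apply, phiGen_Y, phiGen_Yinv]
    exact t0_mul_vAK n k δ p pinv hp
  | Yinv_Y =>
    simp only [map_mul, map_one, FreeAlgebra.lift_ι_apply, phiGen_Y, phiGen_Yinv]
    exact vAK_mul_t0 n k δ p pinv hp
  | Xcomm i j hi1 hi2 hj1 hj2 hd =>
    simp only [map_mul, FreeAlgebra.lift_ι_apply, phiGen_X,
      if_pos (⟨hi1, hi2⟩ : 1 ≤ i ∧ i ≤ n - 1), if_pos (⟨hj1, hj2⟩ : 1 ≤ j ∧ j ≤ n - 1)]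
    exact tgn_comm n k δ p hi2 hj2 hd
  | braid i j hi1 hi2 hj1 hj2 hd =>
    simp only [map_mul, FreeAlgebra.lift_ι_apply, phiGen_X,
      if_pos (⟨hi1, hi2⟩ : 1 ≤ i ∧ i ≤ n - 1), if_pos (⟨hj1, hj2⟩ : 1 ≤ j ∧ j ≤ n - 1)]
    exact tgn_braid n k δ p hi1 hi2 hj1 hj2 hd
  | Xe i hi1 hi2 =>
    simp only [map_mul, map_smul, FreeAlgebra.lift_ι_apply, phiGen_X, phiGen_e,
      if_pos (⟨hi1, hi2⟩ : 1 ≤ i ∧ i ≤ n - 1)]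
    simp
  | eX i hi1 hi2 =>
    simp only [map_mul, map_smul, FreeAlgebra.lift_ι_apply, phiGen_X, phiGen_e,
      if_pos (⟨hi1, hi2⟩ : 1 ≤ i ∧ i ≤ n - 1)]
    simp
  | eXe i j hi1 hi2 hj1 hj2 hd =>
    simp only [map_mul, map_smul, FreeAlgebra.lift_ι_apply, phiGen_X, phiGen_e,
      if_pos (⟨hi1, hi2⟩ : 1 ≤ i ∧ i ≤ n - 1), if_pos (⟨hj1, hj2⟩ : 1 ≤ j ∧ j ≤ n - 1)]
    simp
  | eXinve i j hi1 hi2 hj1 hj2 hd =>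
    simp only [map_mul, map_smul, FreeAlgebra.lift_ι_apply, phiGen_Xinv, phiGen_e,
      if_pos (⟨hi1, hi2⟩ : 1 ≤ i ∧ i ≤ n - 1), if_pos (⟨hj1, hj2⟩ : 1 ≤ j ∧ j ≤ n - 1)]
    simp
  | ee i hi1 hi2 =>
    simp only [map_mul, map_smul, FreeAlgebra.lift_ι_apply, phiGen_e,
      if_pos (⟨hi1, hi2⟩ : 1 ≤ i ∧ i ≤ n - 1)]
    simp
  | Xinv_eq i hi1 hi2 =>
    simp only [map_add, map_sub, map_smul, map_one, FreeAlgebra.lift_ι_apply,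
      phiGen_X, phiGen_Xinv, phiGen_e, if_pos (⟨hi1, hi2⟩ : 1 ≤ i ∧ i ≤ n - 1)]
    simp
  | ecomm i j hi1 hi2 hj1 hj2 hd =>
    simp only [map_mul, FreeAlgebra.lift_ι_apply, phiGen_e,
      if_pos (⟨hi1, hi2⟩ : 1 ≤ i ∧ i ≤ n - 1), if_pos (⟨hj1, hj2⟩ : 1 ≤ j ∧ j ≤ n - 1)]
  | eXX i j hi1 hi2 hj1 hj2 hd =>
    simp only [map_mul, FreeAlgebra.lift_ι_apply, phiGen_X, phiGen_e,
      if_pos (⟨hi1, hi2⟩ : 1 ≤ i ∧ i ≤ n - 1), if_pos (⟨hj1, hj2⟩ : 1 ≤ j ∧ j ≤ n - 1)]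
    simp
  | eXinvXinv i j hi1 hi2 hj1 hj2 hd =>
    simp only [map_mul, FreeAlgebra.lift_ι_apply, phiGen_Xinv, phiGen_e,
      if_pos (⟨hi1, hi2⟩ : 1 ≤ i ∧ i ≤ n - 1), if_pos (⟨hj1, hj2⟩ : 1 ≤ j ∧ j ≤ n - 1)]
    simp
  | eee i j hi1 hi2 hj1 hj2 hd =>
    simp only [map_mul, FreeAlgebra.lift_ι_apply, phiGen_e,
      if_pos (⟨hi1, hi2⟩ : 1 ≤ i ∧ i ≤ n - 1), if_pos (⟨hj1, hj2⟩ : 1 ≤ j ∧ j ≤ n - 1)]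
    simp
  | fourBraid h2 =>
    simp only [map_mul, FreeAlgebra.lift_ι_apply, phiGen_X, phiGen_Y,
      if_pos (⟨le_rfl, by omega⟩ : 1 ≤ 1 ∧ 1 ≤ n - 1)]
    exact (tgn_fourBraid n k δ p h2).symm
  | YXcomm i h2i hi2 =>
    simp only [map_mul, FreeAlgebra.lift_ι_apply, phiGen_X, phiGen_Y,
      if_pos (⟨by omega, hi2⟩ : 1 ≤ i ∧ i ≤ n - 1)]
    exact tgn_comm n k δ p (by omega) hi2 (by rw [Nat.dist_zero_left]; omega)
  | YXYe h2 =>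
    simp only [map_mul, map_smul, FreeAlgebra.lift_ι_apply, phiGen_X, phiGen_Y, phiGen_e,
      if_pos (⟨le_rfl, by omega⟩ : 1 ≤ 1 ∧ 1 ≤ n - 1)]
    simp
  | Ypoly =>
    rw [map_zero, map_list_prod, List.map_map]
    rw [← tgn_prod_zero n k δ p]
    refine congrArg List.prod (List.map_congr_left fun i _ => ?_)
    simp only [Function.comp, map_sub, AlgHom.commutes, FreeAlgebra.lift_ι_apply, phiGen_Y]
  | eYe m h2 hm1 hm2 =>
    simp only [map_mul, map_pow, map_smul, FreeAlgebra.lift_ι_apply, phiGen_Y, phiGen_e,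
      if_pos (⟨by omega, by omega⟩ : 1 ≤ 1 ∧ 1 ≤ n - 1)]
    simp

end Stmt15Aux3
/-- An `R`-algebra structure on the quotient of an `R`-algebra by a ring congruence. -/
noncomputable instance ringConQuotientAlgebra {R A : Type} [CommRing R] [Ring A]
    [Algebra R A] (c : RingCon A) : Algebra R c.Quotient where
  smul r x := r • x
  algebraMap :=
    { toFun := fun r => ((algebraMap R A r : A) : c.Quotient)
      map_one' := congrArg RingCon.toQuotient (map_one _)
      map_mul' := fun a b => congrArg RingCon.toQuotient (map_mul _ a b)
      map_zero' := congrArg RingCon.toQuotient (map_zero _)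
      map_add' := fun a b => congrArg RingCon.toQuotient (map_add _ a b) }
  commutes' r xq := Quotient.inductionOn' xq fun a =>
    congrArg RingCon.toQuotient (Algebra.commutes r a)
  smul_def' r xq := Quotient.inductionOn' xq fun a =>
    congrArg RingCon.toQuotient (Algebra.smul_def r a)

section Stmt15Aux4

open BBGen AKGen

variable {R : Type} [CommRing R] (n k : ℕ)
  (x lam laminv δ κ κinv : R) (p pinv Acoef : ℕ → R)

local notation "𝓑" => BB R n k x lam laminv δ κ κinv p pinv Acoef
local notation "𝓡" => BBGen.BBRel R n k x lam laminv δ κ κinv p pinv Acoef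
local notation "𝓠" => RingCon.Quotient (TwoSidedIdeal.ringCon (TwoSidedIdeal.span
  {(BB.gen (BBGen.e (n - 1)) : BB R n k x lam laminv δ κ κinv p pinv Acoef)}))

/-- The quotient map as an algebra homomorphism. -/
noncomputable def mkQA : 𝓑 →ₐ[R] 𝓠 where
  toFun := RingCon.toQuotient
  map_one' := rfl
  map_mul' _ _ := rfl
  map_zero' := rfl
  map_add' _ _ := rfl
  commutes' _ := rfl

theorem mkQA_e_zero (hn : 2 ≤ n) {i : ℕ} (hi1 : 1 ≤ i) (hi2 : i ≤ n - 1) :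
    mkQA n k x lam laminv δ κ κinv p pinv Acoef (BB.gen (e i)) = 0 := by
  have hmem : (BB.gen (e i) : 𝓑)
      ∈ TwoSidedIdeal.span {(BB.gen (e (n - 1)) : 𝓑)} := by
    rw [← span_e_eq n k x lam laminv δ κ κinv p pinv Acoef hn hi1 hi2]
    exact TwoSidedIdeal.mem_span_iff.mpr (fun I hI => hI (Set.mem_singleton _))
  exact Quotient.sound' ((TwoSidedIdeal.rel_iff _ _ _).mpr (by rwa [sub_zero]))

theorem bb_X_Xinv {i : ℕ} (hi1 : 1 ≤ i) (hi2 : i ≤ n - 1) :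
    (BB.gen (X i) : 𝓑) * BB.gen (Xinv i) = 1 := by
  have h : (RingQuot.mkAlgHom R 𝓡) (g R (X i) * g R (Xinv i))
      = (RingQuot.mkAlgHom R 𝓡) 1 := RingQuot.mkAlgHom_rel R (BBRel.X_Xinv i hi1 hi2)
  rw [map_mul, map_one] at h
  exact h

theorem bb_Yinv_Y : (BB.gen BBGen.Yinv : 𝓑) * BB.gen BBGen.Y = 1 := by
  have h : (RingQuot.mkAlgHom R 𝓡) (g R BBGen.Yinv * g R BBGen.Y)
      = (RingQuot.mkAlgHom R 𝓡) 1 := RingQuot.mkAlgHom_rel R BBRel.Yinv_Y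
  rw [map_mul, map_one] at h
  exact h

theorem bb_Xinv_eq {i : ℕ} (hi1 : 1 ≤ i) (hi2 : i ≤ n - 1) :
    (BB.gen (Xinv i) : 𝓑) = BB.gen (X i) - δ • 1 + δ • BB.gen (e i) := by
  have h : (RingQuot.mkAlgHom R 𝓡) (g R (Xinv i))
      = (RingQuot.mkAlgHom R 𝓡) (g R (X i) - δ • 1 + δ • g R (e i)) :=
    RingQuot.mkAlgHom_rel R (BBRel.Xinv_eq i hi1 hi2)
  rw [map_add, map_sub, map_smul, map_smul, map_one] at h
  exact h

theorem bb_Xcomm {i j : ℕ} (hi1 : 1 ≤ i) (hi2 : i ≤ n - 1) (hj1 : 1 ≤ j) (hj2 : j ≤ n - 1)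
    (hd : 1 < Nat.dist i j) :
    (BB.gen (X i) : 𝓑) * BB.gen (X j) = BB.gen (X j) * BB.gen (X i) := by
  have h : (RingQuot.mkAlgHom R 𝓡) (g R (X i) * g R (X j))
      = (RingQuot.mkAlgHom R 𝓡) (g R (X j) * g R (X i)) :=
    RingQuot.mkAlgHom_rel R (BBRel.Xcomm i j hi1 hi2 hj1 hj2 hd)
  rw [map_mul, map_mul] at h
  exact h

theorem bb_braid {i j : ℕ} (hi1 : 1 ≤ i) (hi2 : i ≤ n - 1) (hj1 : 1 ≤ j) (hj2 : j ≤ n - 1)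
    (hd : Nat.dist i j = 1) :
    (BB.gen (X i) : 𝓑) * BB.gen (X j) * BB.gen (X i)
      = BB.gen (X j) * BB.gen (X i) * BB.gen (X j) := by
  have h : (RingQuot.mkAlgHom R 𝓡) (g R (X i) * g R (X j) * g R (X i))
      = (RingQuot.mkAlgHom R 𝓡) (g R (X j) * g R (X i) * g R (X j)) :=
    RingQuot.mkAlgHom_rel R (BBRel.braid i j hi1 hi2 hj1 hj2 hd)
  simp only [map_mul] at h
  exact h

theorem bb_fourBraid (hn : 2 ≤ n) :
    (BB.gen (X 1) : 𝓑) * BB.gen BBGen.Y * BB.gen (X 1) * BB.gen BBGen.Y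
      = BB.gen BBGen.Y * BB.gen (X 1) * BB.gen BBGen.Y * BB.gen (X 1) := by
  have h : (RingQuot.mkAlgHom R 𝓡) (g R (X 1) * g R BBGen.Y * g R (X 1) * g R BBGen.Y)
      = (RingQuot.mkAlgHom R 𝓡) (g R BBGen.Y * g R (X 1) * g R BBGen.Y * g R (X 1)) :=
    RingQuot.mkAlgHom_rel R (BBRel.fourBraid hn)
  simp only [map_mul] at h
  exact h

theorem bb_YXcomm {i : ℕ} (h2i : 2 ≤ i) (hi2 : i ≤ n - 1) :
    (BB.gen BBGen.Y : 𝓑) * BB.gen (X i) = BB.gen (X i) * BB.gen BBGen.Y := by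
  have h : (RingQuot.mkAlgHom R 𝓡) (g R BBGen.Y * g R (X i))
      = (RingQuot.mkAlgHom R 𝓡) (g R (X i) * g R BBGen.Y) :=
    RingQuot.mkAlgHom_rel R (BBRel.YXcomm i h2i hi2)
  rw [map_mul, map_mul] at h
  exact h

theorem bb_Ypoly :
    ((List.range k).map (fun i => (BB.gen BBGen.Y : 𝓑) - algebraMap R 𝓑 (p i))).prod
      = 0 := by
  have h : (RingQuot.mkAlgHom R 𝓡)
      (((List.range k).map
        (fun i => g R BBGen.Y - algebraMap R (FreeAlgebra R BBGen) (p i))).prod)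
      = (RingQuot.mkAlgHom R 𝓡) 0 := RingQuot.mkAlgHom_rel R BBRel.Ypoly
  rw [map_zero, map_list_prod, List.map_map] at h
  refine Eq.trans ?_ h
  refine congrArg List.prod (List.map_congr_left fun i _ => ?_)
  simp only [Function.comp, map_sub, AlgHom.commutes, BB.gen]
  rfl

end Stmt15Aux4
section Stmt15Aux5

open BBGen AKGen

variable {R : Type} [CommRing R] (n k : ℕ)
  (x lam laminv δ κ κinv : R) (p pinv Acoef : ℕ → R)

local notation "𝓑" => BB R n k x lam laminv δ κ κinv p pinv Acoef
local notation "𝓠" => RingCon.Quotient (TwoSidedIdeal.ringCon (TwoSidedIdeal.span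
  {(BB.gen (BBGen.e (n - 1)) : BB R n k x lam laminv δ κ κinv p pinv Acoef)}))

/-- The map on generators inducing `AK →ₐ BB/I`. -/
noncomputable def psiGen : AKGen → 𝓠
  | AKGen.T m =>
    if m = 0 then mkQA n k x lam laminv δ κ κinv p pinv Acoef (BB.gen BBGen.Y)
    else if m ≤ n - 1 then mkQA n k x lam laminv δ κ κinv p pinv Acoef (BB.gen (BBGen.X m))
    else if (m - n) % 3 = 0 then
      mkQA n k x lam laminv δ κ κinv p pinv Acoef (BB.gen (BBGen.X (decIdx n ((m - n) / 3))))
    else if (m - n) % 3 = 1 then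
      mkQA n k x lam laminv δ κ κinv p pinv Acoef (BB.gen (BBGen.Xinv (decIdx n ((m - n) / 3))))
    else mkQA n k x lam laminv δ κ κinv p pinv Acoef (BB.gen (BBGen.e (decIdx n ((m - n) / 3))))

theorem psiGen_T (m : ℕ) : psiGen n k x lam laminv δ κ κinv p pinv Acoef (AKGen.T m)
    = if m = 0 then mkQA n k x lam laminv δ κ κinv p pinv Acoef (BB.gen BBGen.Y)
    else if m ≤ n - 1 then mkQA n k x lam laminv δ κ κinv p pinv Acoef (BB.gen (BBGen.X m))
    else if (m - n) % 3 = 0 then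
      mkQA n k x lam laminv δ κ κinv p pinv Acoef (BB.gen (BBGen.X (decIdx n ((m - n) / 3))))
    else if (m - n) % 3 = 1 then
      mkQA n k x lam laminv δ κ κinv p pinv Acoef (BB.gen (BBGen.Xinv (decIdx n ((m - n) / 3))))
    else mkQA n k x lam laminv δ κ κinv p pinv Acoef
      (BB.gen (BBGen.e (decIdx n ((m - n) / 3)))) := rfl

theorem psiGen_T0 : psiGen n k x lam laminv δ κ κinv p pinv Acoef (AKGen.T 0)
    = mkQA n k x lam laminv δ κ κinv p pinv Acoef (BB.gen BBGen.Y) := rfl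

theorem psiGen_Tin {m : ℕ} (h1 : 1 ≤ m) (h2 : m ≤ n - 1) :
    psiGen n k x lam laminv δ κ κinv p pinv Acoef (AKGen.T m)
    = mkQA n k x lam laminv δ κ κinv p pinv Acoef (BB.gen (BBGen.X m)) := by
  rw [psiGen_T, if_neg (by omega), if_pos h2]

theorem decIdx_encIdx (hn : 2 ≤ n) {i : ℕ} (hi : ¬(1 ≤ i ∧ i ≤ n - 1)) :
    decIdx n (encIdx n i) = i := by
  rcases Nat.eq_zero_or_pos i with h0 | h1
  · subst h0; simp [encIdx, decIdx]
  · have hni : n ≤ i := by omega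
    have he : encIdx n i = i - n + 1 := by rw [encIdx, if_neg (by omega)]
    rw [he, decIdx, if_neg (by omega)]
    omega

theorem psiGen_outX (hn : 2 ≤ n) {i : ℕ} (hi : ¬(1 ≤ i ∧ i ≤ n - 1)) :
    psiGen n k x lam laminv δ κ κinv p pinv Acoef (AKGen.T (n + 3 * encIdx n i))
    = mkQA n k x lam laminv δ κ κinv p pinv Acoef (BB.gen (BBGen.X i)) := by
  rw [psiGen_T, if_neg (by omega), if_neg (by omega), Nat.add_sub_cancel_left,
    Nat.mul_mod_right, Nat.mul_div_cancel_left _ (by norm_num : 0 < 3)]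
  rw [if_pos rfl, decIdx_encIdx n hn hi]

theorem psiGen_outXinv (hn : 2 ≤ n) {i : ℕ} (hi : ¬(1 ≤ i ∧ i ≤ n - 1)) :
    psiGen n k x lam laminv δ κ κinv p pinv Acoef (AKGen.T (n + 3 * encIdx n i + 1))
    = mkQA n k x lam laminv δ κ κinv p pinv Acoef (BB.gen (BBGen.Xinv i)) := by
  have hs : n + 3 * encIdx n i + 1 - n = 3 * encIdx n i + 1 := by omega
  rw [psiGen_T, if_neg (by omega), if_neg (by omega), hs, Nat.mul_add_mod,
    Nat.mul_add_div (by norm_num : 0 < 3)]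
  norm_num
  rw [decIdx_encIdx n hn hi]

theorem psiGen_oute (hn : 2 ≤ n) {i : ℕ} (hi : ¬(1 ≤ i ∧ i ≤ n - 1)) :
    psiGen n k x lam laminv δ κ κinv p pinv Acoef (AKGen.T (n + 3 * encIdx n i + 2))
    = mkQA n k x lam laminv δ κ κinv p pinv Acoef (BB.gen (BBGen.e i)) := by
  have hs : n + 3 * encIdx n i + 2 - n = 3 * encIdx n i + 2 := by omega
  rw [psiGen_T, if_neg (by omega), if_neg (by omega), hs, Nat.mul_add_mod,
    Nat.mul_add_div (by norm_num : 0 < 3)]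
  norm_num
  rw [decIdx_encIdx n hn hi]

theorem psi_rel (hn : 2 ≤ n) :
    ∀ ⦃a b : FreeAlgebra R AKGen⦄, AKGen.AKRel R n k δ p a b →
      FreeAlgebra.lift R (psiGen n k x lam laminv δ κ κinv p pinv Acoef) a
        = FreeAlgebra.lift R (psiGen n k x lam laminv δ κ κinv p pinv Acoef) b := by
  intro a b h
  induction h with
  | fourBraid h2 =>
    simp only [map_mul, FreeAlgebra.lift_ι_apply, psiGen_T0,
      psiGen_Tin n k x lam laminv δ κ κinv p pinv Acoef le_rfl (by omega : 1 ≤ n - 1)]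
    have h3 := congrArg (mkQA n k x lam laminv δ κ κinv p pinv Acoef)
      (bb_fourBraid n k x lam laminv δ κ κinv p pinv Acoef h2)
    simp only [map_mul] at h3
    exact h3.symm
  | comm i j hi hj hd =>
    rcases Nat.eq_zero_or_pos i with h0i | h1i
    · subst h0i
      have h2j : 2 ≤ j := by
        have := Nat.dist_zero_left j ▸ hd
        omega
      simp only [map_mul, FreeAlgebra.lift_ι_apply, psiGen_T0,
        psiGen_Tin n k x lam laminv δ κ κinv p pinv Acoef (by omega) hj]
      have h3 := congrArg (mkQA n k x lam laminv δ κ κinv p pinv Acoef)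
        (bb_YXcomm n k x lam laminv δ κ κinv p pinv Acoef h2j hj)
      simp only [map_mul] at h3
      exact h3
    · rcases Nat.eq_zero_or_pos j with h0j | h1j
      · subst h0j
        have h2i : 2 ≤ i := by
          have := Nat.dist_zero_right i ▸ hd
          omega
        simp only [map_mul, FreeAlgebra.lift_ι_apply, psiGen_T0,
          psiGen_Tin n k x lam laminv δ κ κinv p pinv Acoef (by omega) hi]
        have h3 := congrArg (mkQA n k x lam laminv δ κ κinv p pinv Acoef)
          (bb_YXcomm n k x lam laminv δ κ κinv p pinv Acoef h2i hi)
        simp only [map_mul] at h3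
        exact h3.symm
      · simp only [map_mul, FreeAlgebra.lift_ι_apply,
          psiGen_Tin n k x lam laminv δ κ κinv p pinv Acoef h1i hi,
          psiGen_Tin n k x lam laminv δ κ κinv p pinv Acoef h1j hj]
        have h3 := congrArg (mkQA n k x lam laminv δ κ κinv p pinv Acoef)
          (bb_Xcomm n k x lam laminv δ κ κinv p pinv Acoef h1i hi h1j hj hd)
        simp only [map_mul] at h3
        exact h3
  | braid i j hi1 hi2 hj1 hj2 hd =>
    simp only [map_mul, FreeAlgebra.lift_ι_apply,
      psiGen_Tin n k x lam laminv δ κ κinv p pinv Acoef hi1 hi2,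
      psiGen_Tin n k x lam laminv δ κ κinv p pinv Acoef hj1 hj2]
    have h3 := congrArg (mkQA n k x lam laminv δ κ κinv p pinv Acoef)
      (bb_braid n k x lam laminv δ κ κinv p pinv Acoef hi1 hi2 hj1 hj2 hd)
    simp only [map_mul] at h3
    exact h3
  | quad i hi1 hi2 =>
    simp only [map_mul, map_add, map_smul, map_one, FreeAlgebra.lift_ι_apply,
      psiGen_Tin n k x lam laminv δ κ κinv p pinv Acoef hi1 hi2]
    have h1 : (BB.gen (X i) : 𝓑) * BB.gen (Xinv i) = 1 :=
      bb_X_Xinv n k x lam laminv δ κ κinv p pinv Acoef hi1 hi2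
    rw [bb_Xinv_eq n k x lam laminv δ κ κinv p pinv Acoef hi1 hi2] at h1
    have h3 := congrArg (mkQA n k x lam laminv δ κ κinv p pinv Acoef) h1
    simp only [map_mul, map_add, map_sub, map_smul, map_one,
      mkQA_e_zero n k x lam laminv δ κ κinv p pinv Acoef hn hi1 hi2, smul_zero,
      add_zero] at h3
    rw [mul_sub, mul_smul_comm, mul_one] at h3
    rw [sub_eq_iff_eq_add.mp h3, add_comm]
  | poly =>
    rw [map_zero, map_list_prod, List.map_map]
    have h0 := congrArg (mkQA n k x lam laminv δ κ κinv p pinv Acoef)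
      (bb_Ypoly n k x lam laminv δ κ κinv p pinv Acoef)
    rw [map_zero, map_list_prod, List.map_map] at h0
    rw [← h0]
    refine congrArg List.prod (List.map_congr_left fun i _ => ?_)
    simp only [Function.comp, map_sub, AlgHom.commutes, FreeAlgebra.lift_ι_apply, psiGen_T0]

end Stmt15Aux5
section Stmt15Aux6

open BBGen AKGen

variable {R : Type} [CommRing R] (n k : ℕ)
  (x lam laminv δ κ κinv : R) (p pinv Acoef : ℕ → R)

local notation "𝓑" => BB R n k x lam laminv δ κ κinv p pinv Acoef
local notation "𝓡" => BBGen.BBRel R n k x lam laminv δ κ κinv p pinv Acoef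
local notation "𝓠" => RingCon.Quotient (TwoSidedIdeal.ringCon (TwoSidedIdeal.span
  {(BB.gen (BBGen.e (n - 1)) : BB R n k x lam laminv δ κ κinv p pinv Acoef)}))

variable (hp : ∀ i, i ≤ k - 1 → p i * pinv i = 1)

/-- The algebra map `BB → AK`. -/
noncomputable def phiA : 𝓑 →ₐ[R] AK R n k δ p :=
  RingQuot.liftAlgHom R ⟨FreeAlgebra.lift R (phiGen n k δ p pinv),
    phi_rel n k x lam laminv δ κ κinv p pinv Acoef hp⟩

theorem phiA_gen (a : BBGen) :
    phiA n k x lam laminv δ κ κinv p pinv Acoef hp (BB.gen a) = phiGen n k δ p pinv a := by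
  have h := RingQuot.liftAlgHom_mkAlgHom_apply (S := R)
    (FreeAlgebra.lift R (phiGen n k δ p pinv))
    (phi_rel n k x lam laminv δ κ κinv p pinv Acoef hp) (FreeAlgebra.ι R a)
  rw [FreeAlgebra.lift_ι_apply] at h
  exact h

theorem phiA_e_zero (hn : 2 ≤ n) :
    phiA n k x lam laminv δ κ κinv p pinv Acoef hp (BB.gen (e (n - 1))) = 0 := by
  rw [phiA_gen, phiGen_e, if_pos (⟨by omega, le_rfl⟩ : 1 ≤ n - 1 ∧ n - 1 ≤ n - 1)]

theorem phi_sound (hn : 2 ≤ n) :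
    ∀ a b : 𝓑, (TwoSidedIdeal.span {(BB.gen (e (n - 1)) : 𝓑)}).ringCon a b →
      phiA n k x lam laminv δ κ κinv p pinv Acoef hp a
        = phiA n k x lam laminv δ κ κinv p pinv Acoef hp b := by
  intro a b hab
  rw [TwoSidedIdeal.rel_iff] at hab
  have hker : a - b ∈ TwoSidedIdeal.ker (phiA n k x lam laminv δ κ κinv p pinv Acoef hp) :=
    TwoSidedIdeal.mem_span_iff.mp hab
      (TwoSidedIdeal.ker (phiA n k x lam laminv δ κ κinv p pinv Acoef hp))
      (Set.singleton_subset_iff.mpr ((TwoSidedIdeal.mem_ker _).mpr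
        (phiA_e_zero n k x lam laminv δ κ κinv p pinv Acoef hp hn)))
  have h0 := (TwoSidedIdeal.mem_ker _).mp hker
  rw [map_sub] at h0
  exact sub_eq_zero.mp h0

/-- The induced map on the quotient, as a ring homomorphism. -/
noncomputable def PhiQ (hn : 2 ≤ n) : 𝓠 →+* AK R n k δ p where
  toFun q := Quotient.liftOn' q (phiA n k x lam laminv δ κ κinv p pinv Acoef hp)
    (phi_sound n k x lam laminv δ κ κinv p pinv Acoef hp hn)
  map_one' := map_one (phiA n k x lam laminv δ κ κinv p pinv Acoef hp)
  map_mul' a b := Quotient.inductionOn₂' a b fun r s =>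
    map_mul (phiA n k x lam laminv δ κ κinv p pinv Acoef hp) r s
  map_zero' := map_zero (phiA n k x lam laminv δ κ κinv p pinv Acoef hp)
  map_add' a b := Quotient.inductionOn₂' a b fun r s =>
    map_add (phiA n k x lam laminv δ κ κinv p pinv Acoef hp) r s

/-- The induced map on the quotient, as an algebra homomorphism. -/
noncomputable def PhiA (hn : 2 ≤ n) : 𝓠 →ₐ[R] AK R n k δ p :=
  { PhiQ n k x lam laminv δ κ κinv p pinv Acoef hp hn with
    commutes' := fun r => (phiA n k x lam laminv δ κ κinv p pinv Acoef hp).commutes r }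

theorem PhiA_mkQA (hn : 2 ≤ n) (b : 𝓑) :
    PhiA n k x lam laminv δ κ κinv p pinv Acoef hp hn
        (mkQA n k x lam laminv δ κ κinv p pinv Acoef b)
      = phiA n k x lam laminv δ κ κinv p pinv Acoef hp b := rfl

/-- The algebra map `AK → BB/I`. -/
noncomputable def psiA (hn : 2 ≤ n) : AK R n k δ p →ₐ[R] 𝓠 :=
  RingQuot.liftAlgHom R ⟨FreeAlgebra.lift R (psiGen n k x lam laminv δ κ κinv p pinv Acoef),
    psi_rel n k x lam laminv δ κ κinv p pinv Acoef hn⟩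

theorem psiA_tgn (hn : 2 ≤ n) (m : ℕ) :
    psiA n k x lam laminv δ κ κinv p pinv Acoef hn (tgn n k δ p m)
      = psiGen n k x lam laminv δ κ κinv p pinv Acoef (AKGen.T m) := by
  have h := RingQuot.liftAlgHom_mkAlgHom_apply (S := R)
    (FreeAlgebra.lift R (psiGen n k x lam laminv δ κ κinv p pinv Acoef))
    (psi_rel n k x lam laminv δ κ κinv p pinv Acoef hn) (FreeAlgebra.ι R (AKGen.T m))
  rw [FreeAlgebra.lift_ι_apply] at h
  exact h

theorem decIdx_not_in (hn : 2 ≤ n) (q : ℕ) :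
    ¬(1 ≤ decIdx n q ∧ decIdx n q ≤ n - 1) := by
  rw [decIdx]; split <;> omega

theorem encIdx_decIdx (hn : 2 ≤ n) (q : ℕ) : encIdx n (decIdx n q) = q := by
  rw [decIdx]
  split
  · rw [encIdx, if_pos rfl]; omega
  · rw [encIdx, if_neg (by omega)]; omega

end Stmt15Aux6
section Stmt15Aux7

open BBGen AKGen

variable {R : Type} [CommRing R] (n k : ℕ)
  (x lam laminv δ κ κinv : R) (p pinv Acoef : ℕ → R)

local notation "𝓑" => BB R n k x lam laminv δ κ κinv p pinv Acoef
local notation "𝓠" => RingCon.Quotient (TwoSidedIdeal.ringCon (TwoSidedIdeal.span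
  {(BB.gen (BBGen.e (n - 1)) : BB R n k x lam laminv δ κ κinv p pinv Acoef)}))

variable (hp : ∀ i, i ≤ k - 1 → p i * pinv i = 1)

theorem phi_psi_tgn (hn : 2 ≤ n) (m : ℕ) :
    PhiA n k x lam laminv δ κ κinv p pinv Acoef hp hn
        (psiA n k x lam laminv δ κ κinv p pinv Acoef hn (tgn n k δ p m))
      = tgn n k δ p m := by
  rw [psiA_tgn n k x lam laminv δ κ κinv p pinv Acoef hn m]
  rcases Nat.eq_zero_or_pos m with h0 | h1
  · subst h0
    rw [psiGen_T0, PhiA_mkQA, phiA_gen, phiGen_Y]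
  · rcases Nat.lt_or_ge m n with hlt | hge
    · have hm2 : m ≤ n - 1 := by omega
      rw [psiGen_Tin n k x lam laminv δ κ κinv p pinv Acoef h1 hm2, PhiA_mkQA,
        phiA_gen, phiGen_X, if_pos (⟨h1, hm2⟩ : 1 ≤ m ∧ m ≤ n - 1)]
    · have hr : (m - n) % 3 = 0 ∨ (m - n) % 3 = 1 ∨ (m - n) % 3 = 2 := by omega
      rcases hr with hr | hr | hr
      · rw [psiGen_T, if_neg (by omega : ¬ m = 0), if_neg (by omega : ¬ m ≤ n - 1), hr,
          if_pos rfl, PhiA_mkQA, phiA_gen, phiGen_X, if_neg (decIdx_not_in n hn _),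
          encIdx_decIdx n hn]
        congr 1
        omega
      · rw [psiGen_T, if_neg (by omega : ¬ m = 0), if_neg (by omega : ¬ m ≤ n - 1), hr,
          if_neg (by norm_num), if_pos rfl, PhiA_mkQA, phiA_gen, phiGen_Xinv,
          if_neg (decIdx_not_in n hn _), encIdx_decIdx n hn]
        congr 1
        omega
      · rw [psiGen_T, if_neg (by omega : ¬ m = 0), if_neg (by omega : ¬ m ≤ n - 1), hr,
          if_neg (by norm_num), if_neg (by norm_num), PhiA_mkQA, phiA_gen, phiGen_e,
          if_neg (decIdx_not_in n hn _), encIdx_decIdx n hn]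
        congr 1
        omega

theorem comp_phi_psi (hn : 2 ≤ n) :
    (PhiA n k x lam laminv δ κ κinv p pinv Acoef hp hn).comp
        (psiA n k x lam laminv δ κ κinv p pinv Acoef hn)
      = AlgHom.id R (AK R n k δ p) := by
  apply RingQuot.ringQuot_ext'
  apply FreeAlgebra.hom_ext
  funext a
  obtain ⟨m⟩ := a
  exact phi_psi_tgn n k x lam laminv δ κ κinv p pinv Acoef hp hn m

theorem comp_psi_phi (hn : 2 ≤ n) :
    ((psiA n k x lam laminv δ κ κinv p pinv Acoef hn).comp
        ((PhiA n k x lam laminv δ κ κinv p pinv Acoef hp hn).comp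
          (mkQA n k x lam laminv δ κ κinv p pinv Acoef)))
      = mkQA n k x lam laminv δ κ κinv p pinv Acoef := by
  apply RingQuot.ringQuot_ext'
  apply FreeAlgebra.hom_ext
  funext a
  show psiA n k x lam laminv δ κ κinv p pinv Acoef hn
      (phiA n k x lam laminv δ κ κinv p pinv Acoef hp (BB.gen a))
    = mkQA n k x lam laminv δ κ κinv p pinv Acoef (BB.gen a)
  rw [phiA_gen]
  cases a with
  | X i =>
    rw [phiGen_X]
    by_cases hi : 1 ≤ i ∧ i ≤ n - 1
    · rw [if_pos hi, psiA_tgn n k x lam laminv δ κ κinv p pinv Acoef hn,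
        psiGen_Tin n k x lam laminv δ κ κinv p pinv Acoef hi.1 hi.2]
    · rw [if_neg hi, psiA_tgn n k x lam laminv δ κ κinv p pinv Acoef hn,
        psiGen_outX n k x lam laminv δ κ κinv p pinv Acoef hn hi]
  | Xinv i =>
    rw [phiGen_Xinv]
    by_cases hi : 1 ≤ i ∧ i ≤ n - 1
    · rw [if_pos hi, map_sub, map_smul, map_one,
        psiA_tgn n k x lam laminv δ κ κinv p pinv Acoef hn,
        psiGen_Tin n k x lam laminv δ κ κinv p pinv Acoef hi.1 hi.2]
      have h2 := congrArg (mkQA n k x lam laminv δ κ κinv p pinv Acoef)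
        (bb_Xinv_eq n k x lam laminv δ κ κinv p pinv Acoef hi.1 hi.2)
      rw [map_add, map_sub, map_smul, map_smul, map_one,
        mkQA_e_zero n k x lam laminv δ κ κinv p pinv Acoef hn hi.1 hi.2,
        smul_zero, add_zero] at h2
      exact h2.symm
    · rw [if_neg hi, psiA_tgn n k x lam laminv δ κ κinv p pinv Acoef hn,
        psiGen_outXinv n k x lam laminv δ κ κinv p pinv Acoef hn hi]
  | e i =>
    rw [phiGen_e]
    by_cases hi : 1 ≤ i ∧ i ≤ n - 1
    · rw [if_pos hi, map_zero,
        mkQA_e_zero n k x lam laminv δ κ κinv p pinv Acoef hn hi.1 hi.2]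
    · rw [if_neg hi, psiA_tgn n k x lam laminv δ κ κinv p pinv Acoef hn,
        psiGen_oute n k x lam laminv δ κ κinv p pinv Acoef hn hi]
  | Y =>
    rw [phiGen_Y, psiA_tgn n k x lam laminv δ κ κinv p pinv Acoef hn, psiGen_T0]
  | Yinv =>
    rw [phiGen_Yinv]
    have h1 := congrArg (psiA n k x lam laminv δ κ κinv p pinv Acoef hn)
      (t0_mul_vAK n k δ p pinv hp)
    rw [map_one, map_mul, psiA_tgn n k x lam laminv δ κ κinv p pinv Acoef hn,
      psiGen_T0] at h1
    have h2 := congrArg (mkQA n k x lam laminv δ κ κinv p pinv Acoef)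
      (bb_Yinv_Y n k x lam laminv δ κ κinv p pinv Acoef)
    rw [map_mul, map_one] at h2
    calc psiA n k x lam laminv δ κ κinv p pinv Acoef hn (vAK n k δ p pinv)
        = 1 * psiA n k x lam laminv δ κ κinv p pinv Acoef hn (vAK n k δ p pinv) :=
          (one_mul _).symm
      _ = mkQA n k x lam laminv δ κ κinv p pinv Acoef (BB.gen BBGen.Yinv) *
            (mkQA n k x lam laminv δ κ κinv p pinv Acoef (BB.gen BBGen.Y) *
              psiA n k x lam laminv δ κ κinv p pinv Acoef hn (vAK n k δ p pinv)) := by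
          rw [← h2, mul_assoc]
      _ = mkQA n k x lam laminv δ κ κinv p pinv Acoef (BB.gen BBGen.Yinv) := by
          rw [h1, mul_one]

include hp in
theorem iso_exists (hn : 2 ≤ n) : Nonempty (𝓠 ≃+* AK R n k δ p) := by
  refine ⟨RingEquiv.ofRingHom (PhiQ n k x lam laminv δ κ κinv p pinv Acoef hp hn)
    (psiA n k x lam laminv δ κ κinv p pinv Acoef hn).toRingHom ?_ ?_⟩
  rotate_left
  · refine RingHom.ext fun q => Quotient.inductionOn' q fun b => ?_
    exact AlgHom.congr_fun (comp_psi_phi n k x lam laminv δ κ κinv p pinv Acoef hp hn) b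
  · refine RingHom.ext fun z => ?_
    exact AlgHom.congr_fun (comp_phi_psi n k x lam laminv δ κ κinv p pinv Acoef hp hn) z

end Stmt15Aux7
open BBGen in
/-- The quotient of `BB^k_n` by the two-sided ideal `I_n` generated by `e_{n−1}`
is isomorphic to the Ariki–Koike algebra `AK^k_n`; moreover `I_n` equals the
ideal generated by any single `e_i` with `1 ≤ i ≤ n−1`. -/
theorem stmt15 {R : Type} [CommRing R] [IsDomain R] (n k : ℕ) (hn : 2 ≤ n)
    (x lam laminv δ κ κinv : R) (p pinv Acoef : ℕ → R)
    (hx : IsUnit x) (hlam : lam * laminv = 1) (hκ : κ * κinv = 1)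
    (hp : ∀ i, i ≤ k - 1 → p i * pinv i = 1)
    (hparam : (1 - x) * δ = lam - laminv) :
    (∀ i, 1 ≤ i → i ≤ n - 1 →
      TwoSidedIdeal.span
        {(BB.gen (BBGen.e i) : BB R n k x lam laminv δ κ κinv p pinv Acoef)} =
      TwoSidedIdeal.span
        {(BB.gen (BBGen.e (n - 1)) : BB R n k x lam laminv δ κ κinv p pinv Acoef)}) ∧
    Nonempty
      ((TwoSidedIdeal.span
        {(BB.gen (BBGen.e (n - 1)) :
            BB R n k x lam laminv δ κ κinv p pinv Acoef)}).ringCon.Quotient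
        ≃+* AK R n k δ p) := by
  constructor
  · intro i hi1 hi2
    exact span_e_eq n k x lam laminv δ κ κinv p pinv Acoef hn hi1 hi2
  · exact iso_exists n k x lam laminv δ κ κinv p pinv Acoef hp hn
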